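/- For natural numbers a, b, c with b ≥ 1 and symmetric counterpart: ∑_{i=0}^{b} ∑_{j=0}^{c} C(c,j)·C(b,i)·(i+j)!·(a+b−i)·(a+2b+c−i−j−1)! / (a+2b+c)! = 1 − b/((b+a+1)(b+a)), as rational numbers. -/

import Mathlib

open Finset Nat

lemma key : ∀ (c N i : ℕ), c + i + 1 ≤ N →
    (N - c)! * ∑ j ∈ Finset.range (c + 1), c.choose j * (i + j)! * (N - i - j - 1)!
      = N ! * i ! * (N - c - i - 1)! := by
  intro c
  induction c with
  | zero =>
    intro N i h
    simp [mul_assoc]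
  | succ c IH =>
    intro N i h
    have hsplit : ∑ j ∈ Finset.range (c + 2), (c+1).choose j * (i + j)! * (N - i - j - 1)!
        = (∑ j ∈ Finset.range (c + 1), c.choose j * (i + j)! * (N - i - j - 1)!)
        + ∑ j ∈ Finset.range (c + 1), c.choose j * ((i+1) + j)! * (N - (i+1) - j - 1)! := by
      rw [Finset.sum_range_succ' (fun j => (c+1).choose j * (i + j)! * (N - i - j - 1)!)]
      have e1 : ∀ j ∈ Finset.range (c+1),
          (c+1).choose (j+1) * (i + (j+1))! * (N - i - (j+1) - 1)!
          = c.choose j * ((i+1) + j)! * (N - (i+1) - j - 1)!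
            + c.choose (j+1) * (i + (j+1))! * (N - i - (j+1) - 1)! := by
        intro j _
        have h1 : i + (j+1) = (i+1) + j := by omega
        have h2 : N - i - (j+1) - 1 = N - (i+1) - j - 1 := by omega
        rw [Nat.choose_succ_succ, h1, h2, add_mul, add_mul]
      rw [Finset.sum_congr rfl e1, Finset.sum_add_distrib]
      have e2 : ∑ j ∈ Finset.range (c+1), c.choose (j+1) * (i + (j+1))! * (N - i - (j+1) - 1)!
            + (c+1).choose 0 * (i + 0)! * (N - i - 0 - 1)!
          = ∑ j ∈ Finset.range (c+1), c.choose j * (i + j)! * (N - i - j - 1)! := by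
        rw [show (c+1).choose 0 = c.choose 0 by simp]
        rw [← Finset.sum_range_succ' (fun j => c.choose j * (i + j)! * (N - i - j - 1)!)]
        rw [Finset.sum_range_succ]
        simp [Nat.choose_succ_self]
      omega
    rw [hsplit]
    have h1 : c + i + 1 ≤ N := by omega
    have h2 : c + (i+1) + 1 ≤ N := by omega
    have IH1 := IH N i h1
    have IH2 := IH N (i+1) h2
    -- abbreviations
    set F1 := ∑ j ∈ Finset.range (c + 1), c.choose j * (i + j)! * (N - i - j - 1)! with hF1
    set F2 := ∑ j ∈ Finset.range (c + 1), c.choose j * ((i+1) + j)! * (N - (i+1) - j - 1)! with hF2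
    have hd : N - c = (N - (c+1)) + 1 := by omega
    have he1 : N - c - i - 1 = (N - (c+1) - i - 1) + 1 := by omega
    have he2 : N - c - (i+1) - 1 = N - (c+1) - i - 1 := by omega
    set d := N - (c+1) with hdd
    set e := N - (c+1) - i - 1 with hee
    rw [he1, hd] at IH1
    rw [he2, hd] at IH2
    have key3 : (d+1) * (d ! * (F1 + F2)) = (d+1) * (N ! * i ! * e !) := by
      have lhs : (d+1) * (d ! * (F1 + F2)) = (d+1)! * F1 + (d+1)! * F2 := by
        rw [Nat.factorial_succ]; ring
      rw [lhs, IH1, IH2, Nat.factorial_succ, Nat.factorial_succ]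
      have hde : d + 1 = e + 1 + (i + 1) := by omega
      rw [hde]; ring
    exact Nat.eq_of_mul_eq_mul_left (Nat.succ_pos d) key3

theorem GS_bottom_double_sum (a b c : ℕ) (hb : 1 ≤ b) :
    ∑ i ∈ Finset.range (b + 1), ∑ j ∈ Finset.range (c + 1),
        ((c.choose j : ℚ) * (b.choose i) * (i + j)! * (a + b - i)
            * (a + 2 * b + c - i - j - 1)!) / ((a + 2 * b + c)! : ℚ)
      = 1 - (b : ℚ) / (((b : ℚ) + a + 1) * ((b : ℚ) + a)) := by
  set N := a + 2 * b + c with hNdef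
  set M := a + 2 * b with hMdef
  have hMcast : (M : ℚ) = (a : ℚ) + 2 * b := by rw [hMdef]; push_cast; ring
  have hMfne : ((M)! : ℚ) ≠ 0 := Nat.cast_ne_zero.mpr (Nat.factorial_ne_zero _)
  have hNfne : ((N)! : ℚ) ≠ 0 := Nat.cast_ne_zero.mpr (Nat.factorial_ne_zero _)
  -- Step 1: collapse the inner sum
  have step1 : ∀ i ∈ Finset.range (b + 1),
      (∑ j ∈ Finset.range (c + 1),
        ((c.choose j : ℚ) * (b.choose i) * (i + j)! * (a + b - i) * (N - i - j - 1)!)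
          / ((N)! : ℚ))
      = (b.choose i : ℚ) * ((a : ℚ) + b - i) * (i)! * ((M - i - 1)! : ℚ) / ((M)! : ℚ) := by
    intro i hi
    have hi' : i ≤ b := by simpa [Nat.lt_succ_iff] using hi
    have hcond : c + i + 1 ≤ N := by omega
    have hk := key c N i hcond
    have hNci : N - c - i - 1 = M - i - 1 := by omega
    have hNc : N - c = M := by omega
    rw [hNci, hNc] at hk
    have hsumq : ((∑ j ∈ Finset.range (c + 1),
        c.choose j * (i + j)! * (N - i - j - 1)! : ℕ) : ℚ)
        = ((N)! : ℚ) * (i)! * ((M - i - 1)! : ℚ) / ((M)! : ℚ) := by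
      rw [eq_div_iff hMfne]
      rw [mul_comm]
      exact_mod_cast hk
    calc ∑ j ∈ Finset.range (c + 1),
          ((c.choose j : ℚ) * (b.choose i) * (i + j)! * (a + b - i) * (N - i - j - 1)!)
            / ((N)! : ℚ)
        = ((b.choose i : ℚ) * ((a : ℚ) + b - i) / ((N)! : ℚ))
            * ((∑ j ∈ Finset.range (c + 1),
                c.choose j * (i + j)! * (N - i - j - 1)! : ℕ) : ℚ) := by
          rw [Nat.cast_sum, Finset.mul_sum]
          refine Finset.sum_congr rfl fun j _ => ?_
          push_cast
          ring
      _ = ((b.choose i : ℚ) * ((a : ℚ) + b - i) / ((N)! : ℚ))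
            * (((N)! : ℚ) * (i)! * ((M - i - 1)! : ℚ) / ((M)! : ℚ)) := by rw [hsumq]
      _ = (b.choose i : ℚ) * ((a : ℚ) + b - i) * (i)! * ((M - i - 1)! : ℚ) / ((M)! : ℚ) := by
          field_simp
  rw [Finset.sum_congr rfl step1]
  -- Step 2: split each term
  have step2 : ∀ i ∈ Finset.range (b + 1),
      (b.choose i : ℚ) * ((a : ℚ) + b - i) * (i)! * ((M - i - 1)! : ℚ) / ((M)! : ℚ)
      = ((b.choose i * (i)! * (M - i)! : ℕ) : ℚ) / ((M)! : ℚ)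
        - (b : ℚ) * (((b.choose i * (i)! * (M - i - 1)! : ℕ) : ℚ) / ((M)! : ℚ)) := by
    intro i hi
    have hi' : i ≤ b := by simpa [Nat.lt_succ_iff] using hi
    have h1 : ((a : ℚ) + b - i) = ((M - i : ℕ) : ℚ) - (b : ℚ) := by
      rw [Nat.cast_sub (by omega : i ≤ M), hMcast]; ring
    have h2 : ((M - i : ℕ) : ℚ) * ((M - i - 1)! : ℚ) = ((M - i)! : ℚ) := by
      have hk : M - i = (M - i - 1) + 1 := by omega
      rw [hk, Nat.factorial_succ]
      push_cast
      ring
    rw [h1]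
    push_cast
    linear_combination ((b.choose i : ℚ) * ((i)! : ℚ) / ((M)! : ℚ)) * h2
  rw [Finset.sum_congr rfl step2, Finset.sum_sub_distrib, ← Finset.mul_sum,
    ← Finset.sum_div, ← Finset.sum_div, ← Nat.cast_sum, ← Nat.cast_sum]
  -- Step 3: evaluate the two single sums
  have hA := key b (M + 1) 0 (by omega)
  have hB := key b M 0 (by omega)
  have hA' : (a + b + 1)! * ∑ j ∈ Finset.range (b + 1), b.choose j * (j)! * (M - j)!
      = ((M + 1))! * (a + b)! := by
    have e1 : M + 1 - b = a + b + 1 := by omega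
    have e2 : M + 1 - b - 0 - 1 = a + b := by omega
    have e3 : ∀ j ∈ Finset.range (b + 1),
        b.choose j * (0 + j)! * (M + 1 - 0 - j - 1)! = b.choose j * (j)! * (M - j)! := by
      intro j _
      have : M + 1 - 0 - j - 1 = M - j := by omega
      rw [this, Nat.zero_add]
    rw [e2, e1, Finset.sum_congr rfl e3] at hA
    simpa using hA
  have hB' : (a + b)! * ∑ j ∈ Finset.range (b + 1), b.choose j * (j)! * (M - j - 1)!
      = (M)! * (a + b - 1)! := by
    have e1 : M - b = a + b := by omega
    have e2 : M - b - 0 - 1 = a + b - 1 := by omega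
    have e3 : ∀ j ∈ Finset.range (b + 1),
        b.choose j * (0 + j)! * (M - 0 - j - 1)! = b.choose j * (j)! * (M - j - 1)! := by
      intro j _
      have : M - 0 - j - 1 = M - j - 1 := by omega
      rw [this, Nat.zero_add]
    rw [e2, e1, Finset.sum_congr rfl e3] at hB
    simpa using hB
  -- Step 4: finish in ℚ
  have habq : ((a : ℚ) + b) ≠ 0 := by
    have : (0 : ℚ) < (a : ℚ) + b := by exact_mod_cast (by omega : 0 < a + b)
    exact ne_of_gt this
  have hab1q : ((a : ℚ) + b + 1) ≠ 0 := by
    have : (0 : ℚ) < (a : ℚ) + b + 1 := by exact_mod_cast (by omega : 0 < a + b + 1)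
    exact ne_of_gt this
  have hfabne : (((a + b)!) : ℚ) ≠ 0 := Nat.cast_ne_zero.mpr (Nat.factorial_ne_zero _)
  have hfab1ne : (((a + b - 1)!) : ℚ) ≠ 0 := Nat.cast_ne_zero.mpr (Nat.factorial_ne_zero _)
  set A := ∑ j ∈ Finset.range (b + 1), b.choose j * (j)! * (M - j)! with hAdef
  set B := ∑ j ∈ Finset.range (b + 1), b.choose j * (j)! * (M - j - 1)! with hBdef
  have hfs1 : ((a + b + 1)! : ℚ) = ((a : ℚ) + b + 1) * ((a + b)! : ℚ) := by
    rw [Nat.factorial_succ]; push_cast; ring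
  have hfs2 : (((M + 1))! : ℚ) = ((M : ℚ) + 1) * ((M)! : ℚ) := by
    rw [Nat.factorial_succ]; push_cast; ring
  have hfs3 : ((a + b)! : ℚ) = ((a : ℚ) + b) * ((a + b - 1)! : ℚ) := by
    obtain ⟨k, hk⟩ : ∃ k, a + b = k + 1 := ⟨a + b - 1, by omega⟩
    rw [hk]
    simp only [Nat.add_sub_cancel]
    rw [Nat.factorial_succ]
    have hkq : ((k : ℚ) + 1) = (a : ℚ) + b := by exact_mod_cast hk.symm
    push_cast
    rw [hkq]
  have hAq : ((a + b + 1)! : ℚ) * A = (((M + 1))! : ℚ) * ((a + b)! : ℚ) := by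
    exact_mod_cast hA'
  have hBq : ((a + b)! : ℚ) * B = ((M)! : ℚ) * ((a + b - 1)! : ℚ) := by
    exact_mod_cast hB'
  have hAval : (A : ℚ) = ((M : ℚ) + 1) * ((M)! : ℚ) / ((a : ℚ) + b + 1) := by
    rw [eq_div_iff hab1q]
    apply mul_right_cancel₀ hfabne
    rw [hfs1, hfs2] at hAq
    linear_combination hAq
  have hBval : (B : ℚ) = ((M)! : ℚ) / ((a : ℚ) + b) := by
    rw [eq_div_iff habq]
    apply mul_right_cancel₀ hfab1ne
    rw [hfs3] at hBq
    linear_combination hBq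
  rw [hAval, hBval, hMcast]
  field_simp
  ring
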